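/- Let R be a subdirectly irreducible BL-ring. Then the annihilator ideals of R are linearly ordered by inclusion, and there are only finitely many annihilator ideals of R. -/

import Mathlib

open Ideal Submodule

section AuxStmt14

variable {R : Type*} [CommRing R]

private lemma stmt14_ann_mul_eq_zero {I : Ideal R} {x y : R}
    (hx : x ∈ I.annihilator) (hy : y ∈ I) : x * y = 0 := by
  simpa [smul_eq_mul] using Submodule.mem_annihilator.mp hx y hy

private lemma stmt14_ann_comparable {M : Ideal R} (hM0 : M ≠ ⊥)
    (hMle : ∀ N : Ideal R, N ≠ ⊥ → M ≤ N)
    (h2 : ∀ I J : Ideal R, J.colon I + I.colon J = ⊤)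
    (I J : Ideal R) :
    I.annihilator ≤ J.annihilator ∨ J.annihilator ≤ I.annihilator := by
  by_contra hc
  push_neg at hc
  obtain ⟨u, huI, huJ⟩ := SetLike.not_le_iff_exists.mp hc.1
  obtain ⟨v, hvJ, hvI⟩ := SetLike.not_le_iff_exists.mp hc.2
  obtain ⟨m, hmM, hm0⟩ := (Submodule.ne_bot_iff M).mp hM0
  -- since u does not annihilate J, the ideal span{u} * J is nonzero, hence contains m
  have hexJ : ∃ x ∈ J, u * x ≠ 0 := by
    by_contra h; push_neg at h
    exact huJ (Submodule.mem_annihilator.mpr fun n hn => by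
      simpa [smul_eq_mul] using h n hn)
  obtain ⟨x₀, hx₀J, hux₀⟩ := hexJ
  have hspanJ : M ≤ Ideal.span {u} * J := by
    apply hMle
    intro hbot
    apply hux₀
    have hmem : u * x₀ ∈ Ideal.span {u} * J :=
      Ideal.mul_mem_mul (Ideal.mem_span_singleton_self u) hx₀J
    rw [hbot] at hmem
    simpa using hmem
  obtain ⟨j, hjJ, hj⟩ := Ideal.mem_span_singleton_mul.mp (hspanJ hmM)
  -- similarly for v and I
  have hexI : ∃ x ∈ I, v * x ≠ 0 := by
    by_contra h; push_neg at h
    exact hvI (Submodule.mem_annihilator.mpr fun n hn => by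
      simpa [smul_eq_mul] using h n hn)
  obtain ⟨y₀, hy₀I, hvy₀⟩ := hexI
  have hspanI : M ≤ Ideal.span {v} * I := by
    apply hMle
    intro hbot
    apply hvy₀
    have hmem : v * y₀ ∈ Ideal.span {v} * I :=
      Ideal.mul_mem_mul (Ideal.mem_span_singleton_self v) hy₀I
    rw [hbot] at hmem
    simpa using hmem
  obtain ⟨i, hiI, hi⟩ := Ideal.mem_span_singleton_mul.mp (hspanI hmM)
  -- use h2 on I and J
  have hsum : (1 : R) ∈ J.colon I ⊔ I.colon J := by
    rw [← Submodule.add_eq_sup, h2 I J]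
    trivial
  obtain ⟨a, ha, b, hb, hab⟩ := Submodule.mem_sup.mp hsum
  have ham : a * m = 0 := by
    rw [← hi]
    have haiJ : a * i ∈ J := by
      simpa [smul_eq_mul] using Submodule.mem_colon.mp ha i hiI
    calc a * (v * i) = v * (a * i) := by ring
    _ = 0 := stmt14_ann_mul_eq_zero hvJ haiJ
  have hbm : b * m = 0 := by
    rw [← hj]
    have hbjI : b * j ∈ I := by
      simpa [smul_eq_mul] using Submodule.mem_colon.mp hb j hjJ
    calc b * (u * j) = u * (b * j) := by ring
    _ = 0 := stmt14_ann_mul_eq_zero huI hbjI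
  apply hm0
  calc m = (a + b) * m := by rw [hab, one_mul]
  _ = a * m + b * m := by ring
  _ = 0 := by rw [ham, hbm, add_zero]

private lemma stmt14_ann_finite {M : Ideal R} (hM0 : M ≠ ⊥)
    (hMle : ∀ N : Ideal R, N ≠ ⊥ → M ≤ N)
    (h1 : ∀ I J : Ideal R, I ⊓ J = I * (J.colon I)) :
    {I : Ideal R | ∃ J : Ideal R, I = J.annihilator}.Finite := by
  obtain ⟨m, hmM, hm0⟩ := (Submodule.ne_bot_iff M).mp hM0
  have hMspan : M = Ideal.span {m} := by
    apply le_antisymm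
    · exact hMle _ (by simp [Ideal.span_singleton_eq_bot, hm0])
    · exact (Ideal.span_le).mpr (by simpa using hmM)
  set T : Ideal R := M.annihilator with hT
  have hTMbot : T * M = ⊥ := by
    rw [eq_bot_iff]
    refine Ideal.mul_le.mpr fun r hr s hs => ?_
    have := stmt14_ann_mul_eq_zero hr hs
    simp [this]
  have hmin : ∀ C : Ideal R, C ≤ M → C ≠ ⊥ → C = M :=
    fun C hc hc0 => le_antisymm hc (hMle C hc0)
  have hTmem : ∀ z : R, z * m = 0 → z ∈ T := by
    intro z hz
    apply Submodule.mem_annihilator.mpr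
    intro n hn
    rw [hMspan] at hn
    obtain ⟨c, hc⟩ := Ideal.mem_span_singleton'.mp hn
    rw [smul_eq_mul, ← hc]
    calc z * (c * m) = c * (z * m) := by ring
    _ = 0 := by rw [hz, mul_zero]
  have hTmax : ∀ W : Ideal R, T ≤ W → W ≠ ⊤ → W ≤ T := by
    intro W hTW hWtop w hw
    by_contra hwT
    apply hWtop
    have hex : ∃ μ ∈ M, w * μ ≠ 0 := by
      by_contra h; push_neg at h
      exact hwT (Submodule.mem_annihilator.mpr fun n hn => by
        simpa [smul_eq_mul] using h n hn)
    obtain ⟨μ, hμM, hwμ⟩ := hex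
    have hsub : Ideal.span {w} * M ≤ M := Ideal.mul_le_right
    have hne : Ideal.span {w} * M ≠ ⊥ := by
      intro hbot
      apply hwμ
      have hmem : w * μ ∈ Ideal.span {w} * M :=
        Ideal.mul_mem_mul (Ideal.mem_span_singleton_self w) hμM
      rw [hbot] at hmem
      simpa using hmem
    have heqM : Ideal.span {w} * M = M := hmin _ hsub hne
    have hmmem : m ∈ Ideal.span {w} * M := heqM.symm ▸ hmM
    obtain ⟨μ', hμ'M, hμ'⟩ := Ideal.mem_span_singleton_mul.mp hmmem
    obtain ⟨e, he⟩ := Ideal.mem_span_singleton'.mp (hMspan ▸ hμ'M)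
    have hzm : (1 - w * e) * m = 0 := by
      have hwem : w * (e * m) = m := by rw [he, hμ']
      calc (1 - w * e) * m = m - w * (e * m) := by ring
      _ = 0 := by rw [hwem, sub_self]
    have h1T : (1 : R) - w * e ∈ T := hTmem _ hzm
    have h1W : (1 : R) ∈ W := by
      have hwe : w * e ∈ W := W.mul_mem_right e hw
      have hsub1 : (1 : R) - w * e ∈ W := hTW h1T
      have := W.add_mem hsub1 hwe
      simpa using this
    exact (Ideal.eq_top_iff_one W).mpr h1W
  have hdiv : ∀ X : Ideal R, X ≤ T → X = T * (X.colon T) := by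
    intro X hX
    have := h1 T X
    rwa [inf_eq_right.mpr hX] at this
  -- nilpotency of T
  have hnilp : ∃ n : ℕ, T ^ n = ⊥ := by
    by_contra hnil
    push_neg at hnil
    set Q : Ideal R := ⨅ n : ℕ, T ^ n with hQ
    have hMQ : M ≤ Q := le_iInf fun n => hMle _ (hnil n)
    have hQle : ∀ n, Q ≤ T ^ n := fun n => iInf_le _ n
    have contraQ : T * Q = Q → False := by
      intro hTQ
      have hq := h1 Q M
      rw [inf_eq_right.mpr hMQ] at hq
      have hMTM : M = T * M := by
        calc M = Q * colon M Q := hq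
        _ = T * Q * colon M Q := by rw [hTQ]
        _ = T * (Q * colon M Q) := mul_assoc _ _ _
        _ = T * M := by rw [← hq]
      exact hM0 (hMTM.trans hTMbot)
    have step0 : ∀ n : ℕ, T ^ n = T ^ (n + 1) → False := by
      intro n hstep
      have hconst : ∀ k, T ^ (n + k) = T ^ n := by
        intro k
        induction k with
        | zero => rfl
        | succ k ih =>
          calc T ^ (n + (k + 1)) = T ^ ((n + k) + 1) := by rw [Nat.add_succ]
          _ = T ^ (n + k) * T := pow_succ T (n + k)
          _ = T ^ n * T := by rw [ih]
          _ = T ^ (n + 1) := (pow_succ T n).symm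
          _ = T ^ n := hstep.symm
      have hQn : Q = T ^ n := by
        apply le_antisymm (hQle n)
        apply le_iInf
        intro j
        calc T ^ n = T ^ (n + j) := (hconst j).symm
        _ ≤ T ^ j := Ideal.pow_le_pow_right (Nat.le_add_left j n)
      apply contraQ
      rw [hQn]
      calc T * T ^ n = T ^ n * T := mul_comm _ _
      _ = T ^ (n + 1) := (pow_succ T n).symm
      _ = T ^ n := hstep.symm
    have Hcl : ∀ n : ℕ, Q.colon T ≤ T ^ n := by
      intro n
      induction n with
      | zero =>
        rw [pow_zero, Ideal.one_eq_top]
        exact le_top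
      | succ n IH =>
        intro x hx
        have hxn : x ∈ T ^ n := IH hx
        have hxT : ∀ t ∈ T, x * t ∈ Q := fun t ht => by
          simpa [smul_eq_mul] using Submodule.mem_colon.mp hx t ht
        set Jx : Ideal R := Ideal.span {x} ⊔ T ^ (n + 1) with hJxdef
        have hJle : Jx ≤ T ^ n := by
          apply sup_le
          · exact (Ideal.span_le).mpr (by simpa using hxn)
          · rw [pow_succ]
            exact Ideal.mul_le_left
        have hxJ : x ∈ Jx := Submodule.mem_sup_left (Ideal.mem_span_singleton_self x)
        have hspanTQ : Ideal.span {x} * T ≤ Q := by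
          refine Ideal.mul_le.mpr fun r hr s hs => ?_
          obtain ⟨c, hc⟩ := Ideal.mem_span_singleton'.mp hr
          have hrs : r * s = c * (x * s) := by rw [← hc]; ring
          rw [hrs]
          exact Ideal.mul_mem_left _ c (hxT s hs)
        have hW := h1 (T ^ n) Jx
        rw [inf_eq_right.mpr hJle] at hW
        by_cases hWtop : Jx.colon (T ^ n : Ideal R) = ⊤
        · exfalso
          have hJeq : Jx = T ^ n := by rw [hW, hWtop, Ideal.mul_top]
          have hstep : T ^ (n + 1) ≤ T ^ (n + 2) := by
            calc T ^ (n + 1) = T * T ^ n := by rw [pow_succ, mul_comm]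
            _ = T * Jx := by rw [hJeq]
            _ = T * Ideal.span {x} ⊔ T * T ^ (n + 1) := by rw [hJxdef, Ideal.mul_sup]
            _ ≤ Q ⊔ T ^ (n + 2) := by
                apply sup_le_sup
                · rw [mul_comm]; exact hspanTQ
                · rw [pow_succ (a := T) (n := n + 1), mul_comm]
            _ ≤ T ^ (n + 2) := sup_le (hQle (n + 2)) le_rfl
          exact step0 (n + 1) (le_antisymm hstep (Ideal.pow_le_pow_right (by omega)))
        · have hWT : Jx.colon (T ^ n : Ideal R) ≤ T := by
            apply hTmax _ _ hWtop
            intro t ht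
            apply Submodule.mem_colon.mpr
            intro p hp
            rw [smul_eq_mul]
            have hmem : t * p ∈ T * T ^ n := Ideal.mul_mem_mul ht hp
            have hTTn : T * T ^ n ≤ Jx := by
              rw [mul_comm, ← pow_succ]
              exact le_sup_right
            exact hTTn hmem
          have hfin : Jx ≤ T ^ (n + 1) := by
            rw [hW, pow_succ]
            exact Ideal.mul_mono le_rfl hWT
          exact hfin hxJ
    have hHQ : Q.colon T ≤ Q := le_iInf Hcl
    have hQT : Q ≤ T := by simpa [pow_one] using hQle 1
    have hQeq : Q = T * (Q.colon T) := hdiv Q hQT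
    apply contraQ
    apply le_antisymm Ideal.mul_le_right
    calc Q = T * (Q.colon T) := hQeq
    _ ≤ T * Q := Ideal.mul_mono le_rfl hHQ
  obtain ⟨κ, hκ⟩ := hnilp
  have hcolon_ann : ∀ I : Ideal R, I.annihilator.colon T = (T * I).annihilator := by
    intro I
    apply le_antisymm
    · intro x hx
      apply Submodule.mem_annihilator.mpr
      intro y hy
      rw [smul_eq_mul]
      refine Submodule.mul_induction_on hy ?_ ?_
      · intro t ht i hi
        have hxt : x * t ∈ I.annihilator := by
          simpa [smul_eq_mul] using Submodule.mem_colon.mp hx t ht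
        calc x * (t * i) = (x * t) * i := by ring
        _ = 0 := stmt14_ann_mul_eq_zero hxt hi
      · intro y z hy' hz'
        rw [mul_add, hy', hz', add_zero]
    · intro x hx
      apply Submodule.mem_colon.mpr
      intro t ht
      rw [smul_eq_mul]
      apply Submodule.mem_annihilator.mpr
      intro i hi
      rw [smul_eq_mul]
      calc (x * t) * i = x * (t * i) := by ring
      _ = 0 := stmt14_ann_mul_eq_zero hx (Ideal.mul_mem_mul ht hi)
  have hannT : ∀ I : Ideal R, I ≠ ⊥ → I.annihilator ≤ T := by
    intro I hI a ha
    apply Submodule.mem_annihilator.mpr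
    intro n hn
    exact Submodule.mem_annihilator.mp ha n (hMle I hI hn)
  have hclass : ∀ n : ℕ, ∀ I : Ideal R, I.annihilator ≠ ⊥ → ¬ I.annihilator ≤ T ^ n →
      ∃ j < n, I.annihilator = T ^ j := by
    intro n
    induction n with
    | zero =>
      intro I _ hle
      exact absurd (by rw [pow_zero, Ideal.one_eq_top]; exact le_top) hle
    | succ n IH =>
      intro I hA0 hle
      by_cases hI : I = ⊥
      · refine ⟨0, Nat.succ_pos n, ?_⟩
        rw [hI, pow_zero, Ideal.one_eq_top, Submodule.annihilator_bot]
      · have hAT : I.annihilator ≤ T := hannT I hI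
        have hAeq : I.annihilator = T * (T * I).annihilator := by
          rw [← hcolon_ann]
          exact hdiv _ hAT
        by_cases hA't : (T * I).annihilator = ⊤
        · have hATeq : I.annihilator = T := by rw [hAeq, hA't, Ideal.mul_top]
          rcases Nat.eq_zero_or_pos n with hn0 | hn1
          · refine absurd ?_ hle
            rw [hn0, pow_one, hATeq]
          · exact ⟨1, by omega, by rw [hATeq, pow_one]⟩
        · have hA'0 : (T * I).annihilator ≠ ⊥ := by
            intro hb
            apply hA0
            rw [eq_bot_iff]
            calc I.annihilator = T * (T * I).annihilator := hAeq
            _ ≤ (T * I).annihilator := Ideal.mul_le_right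
            _ = ⊥ := hb
          have hA'le : ¬ (T * I).annihilator ≤ T ^ n := by
            intro hcon
            apply hle
            calc I.annihilator = T * (T * I).annihilator := hAeq
            _ ≤ T * T ^ n := Ideal.mul_mono le_rfl hcon
            _ = T ^ (n + 1) := by rw [mul_comm, ← pow_succ]
          obtain ⟨j, hj, hjeq⟩ := IH _ hA'0 hA'le
          exact ⟨j + 1, by omega, by rw [hAeq, hjeq, mul_comm, ← pow_succ]⟩
  apply Set.Finite.subset (Set.Finite.insert ⊥ ((Set.finite_Iio κ).image (fun j => T ^ j)))
  rintro A ⟨I, rfl⟩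
  by_cases hA0 : I.annihilator = ⊥
  · exact Set.mem_insert_iff.mpr (Or.inl hA0)
  · have hnle : ¬ I.annihilator ≤ T ^ κ := by
      rw [hκ, le_bot_iff]
      exact hA0
    obtain ⟨j, hj, hjeq⟩ := hclass κ I hA0 hnle
    exact Set.mem_insert_iff.mpr (Or.inr ⟨j, Set.mem_Iio.mpr hj, hjeq.symm⟩)

end AuxStmt14

/-- In a subdirectly irreducible BL-ring, the annihilator ideals are linearly
ordered by inclusion and finite in number. (`I → J = J.colon I`; `I*` is the
annihilator of `I`; subdirectly irreducible means there is a smallest nonzero ideal.) -/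
theorem stmt_14 {R : Type*} [CommRing R]
    (h1 : ∀ I J : Ideal R, I ⊓ J = I * (J.colon I))
    (h2 : ∀ I J : Ideal R, J.colon I + I.colon J = ⊤)
    (hsi : ∃ M : Ideal R, M ≠ ⊥ ∧ ∀ N : Ideal R, N ≠ ⊥ → M ≤ N) :
    (∀ I J : Ideal R, (∃ I' : Ideal R, I = I'.annihilator) →
      (∃ J' : Ideal R, J = J'.annihilator) → I ≤ J ∨ J ≤ I) ∧
      {I : Ideal R | ∃ J : Ideal R, I = J.annihilator}.Finite := by
  obtain ⟨M, hM0, hMle⟩ := hsi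
  constructor
  · rintro I J ⟨I', rfl⟩ ⟨J', rfl⟩
    exact stmt14_ann_comparable hM0 hMle h2 I' J'
  · exact stmt14_ann_finite hM0 hMle h1
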